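/- Let S be an Artinian commutative semiring and let Σ = {a, b} be a two-letter alphabet. There is no recognizable weighted language L : Σ* → S whose support equals {aⁿbⁿ | n ∈ ℕ}. -/

import Mathlib

set_option maxHeartbeats 1000000


/-- The length of an `S`-semimodule `M`: the supremum of all `r : ℕ` such that there exists a
strictly increasing chain `M₀ ⊊ M₁ ⊊ ⋯ ⊊ M_r` of subsemimodules (i.e. `S`-submodules) of `M`. -/
noncomputable def semimoduleLength (S M : Type*) [Semiring S] [AddCommMonoid M]
    [Module S M] : ℕ∞ :=
  ⨆ r : {r : ℕ // ∃ c : Fin (r + 1) → Submodule S M, StrictMono c}, ((r : ℕ) : ℕ∞)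


/-- A commutative semiring `S` is Artinian if every finitely generated `S`-semimodule has
finite length. -/
def IsArtinianSemiring (S : Type u) [CommSemiring S] : Prop :=
  ∀ (M : Type u) [AddCommMonoid M] [Module S M], Module.Finite S M →
    semimoduleLength S M ≠ ⊤


/-- A weighted language `L : Σ* → S` is recognizable if it admits a linear representation
`(Q, fin, fout, μ)`: a finite state set `Q`, vectors `fin, fout : Q → S`, and a monoid
homomorphism `μ` into the multiplicative monoid of `Q × Q` matrices over `S`, with
`L(w) = fin ⬝ μ(w) ⬝ fout` for all words `w`. -/
def IsRecognizable {A : Type*} {S : Type*} [CommSemiring S] (L : FreeMonoid A → S) : Prop :=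
  ∃ (n : ℕ) (fin fout : Fin n → S) (μ : FreeMonoid A →* Matrix (Fin n) (Fin n) S),
    ∀ w, L w = dotProduct (Matrix.vecMul fin (μ w)) fout

/-- Over an Artinian commutative semiring, no recognizable weighted language over the
two-letter alphabet `{a, b}` (here `a = true`, `b = false`) has support
`{aⁿbⁿ | n ∈ ℕ}`. -/
theorem no_recognizable_anbn {S : Type u} [CommSemiring S] (hS : IsArtinianSemiring S) :
    ¬ ∃ L : FreeMonoid Bool → S, IsRecognizable L ∧
      {w | L w ≠ 0} = {w : FreeMonoid Bool |
        ∃ m : ℕ, w = FreeMonoid.ofList (List.replicate m true ++ List.replicate m false)} := by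
  classical
  rintro ⟨L, ⟨n, fin, fout, μ, hμ⟩, hsupp⟩
  have hsupp' : ∀ w, L w ≠ 0 ↔ ∃ m, w = FreeMonoid.ofList
      (List.replicate m true ++ List.replicate m false) := fun w => Set.ext_iff.mp hsupp w
  set v : ℕ → (Fin n → S) :=
    fun m => Matrix.vecMul fin (μ (FreeMonoid.ofList (List.replicate m true))) with hv
  set φ : ℕ → (Fin n → S) → S := fun k x =>
    dotProduct (Matrix.vecMul x (μ (FreeMonoid.ofList (List.replicate k false)))) fout
    with hφ
  have hLφ : ∀ m k, L (FreeMonoid.ofList (List.replicate m true ++ List.replicate k false))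
      = φ k (v m) := by
    intro m k
    have hw : FreeMonoid.ofList (List.replicate m true ++ List.replicate k false)
        = FreeMonoid.ofList (List.replicate m true) *
          FreeMonoid.ofList (List.replicate k false) := rfl
    rw [hμ, hw, map_mul, hφ, hv]
    simp [Matrix.vecMul_vecMul]
  have hzero : ∀ m k, m ≠ k → φ k (v m) = 0 := by
    intro m k hmk
    rw [← hLφ]
    by_contra h
    obtain ⟨j, hj⟩ := (hsupp' _).mp h
    have hj' : List.replicate m true ++ List.replicate k false
        = List.replicate j true ++ List.replicate j false := congrArg FreeMonoid.toList hj
    have h1 := congrArg (List.count true) hj'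
    have h2 := congrArg (List.count false) hj'
    simp [List.count_append, List.count_replicate] at h1 h2
    omega
  have hne : ∀ k, φ k (v k) ≠ 0 := by
    intro k
    rw [← hLφ]
    exact (hsupp' _).mpr ⟨k, rfl⟩
  set N : ℕ → Submodule S (Fin n → S) :=
    fun k => Submodule.span S {x | ∃ m, k ≤ m ∧ x = v m} with hN
  have hφN : ∀ k x, x ∈ N (k+1) → φ k x = 0 := by
    intro k x hx
    induction hx using Submodule.span_induction with
    | mem x hx => obtain ⟨m, hm, rfl⟩ := hx; exact hzero m k (by omega)
    | zero => simp [hφ]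
    | add x y _ _ hx hy =>
        rw [hφ] at hx hy ⊢
        simp only [Matrix.add_vecMul, add_dotProduct, hx, hy, add_zero]
    | smul c x _ hx =>
        rw [hφ] at hx ⊢
        simp only [Matrix.smul_vecMul, smul_dotProduct, hx, smul_eq_mul, mul_zero]
  have hanti : ∀ j k, j ≤ k → N k ≤ N j := by
    intro j k hjk
    apply Submodule.span_mono
    rintro x ⟨m, hm, rfl⟩
    exact ⟨m, by omega, rfl⟩
  have hstrict : ∀ k, N (k+1) < N k := by
    intro k
    refine lt_of_le_of_ne (hanti _ _ (by omega)) ?_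
    intro he
    have hvk : v k ∈ N k := Submodule.subset_span ⟨k, le_refl k, rfl⟩
    rw [← he] at hvk
    exact hne k (hφN k _ hvk)
  have : Module.Finite S (Fin n → S) := Module.Finite.pi
  have hfin : semimoduleLength S (Fin n → S) ≠ ⊤ := hS (Fin n → S) this
  obtain ⟨t, ht⟩ := WithTop.ne_top_iff_exists.mp hfin
  have hchain : StrictMono (fun i : Fin (t + 1 + 1) => N (t + 1 - (i : ℕ))) := by
    intro i j hij
    have hj := j.isLt
    have h1 : t + 1 - (j : ℕ) + 1 ≤ t + 1 - (i : ℕ) := by omega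
    exact lt_of_le_of_lt (hanti _ _ h1) (hstrict (t + 1 - (j : ℕ)))
  have hle : ((t + 1 : ℕ) : ℕ∞) ≤ semimoduleLength S (Fin n → S) :=
    le_iSup_of_le ⟨t + 1, fun i : Fin (t + 1 + 1) => N (t + 1 - (i : ℕ)), hchain⟩ le_rfl
  rw [← ht] at hle
  rw [ENat.some_eq_coe] at hle
  exact absurd (ENat.coe_le_coe.mp hle) (by omega)
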